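/- Let L ≥ 1, let α be an L×L complex matrix with ‖α‖ < 1, and let U, V ∈ U(L). Then the 2L×2L block matrix S(α,U,V) = [[α, ρ(α)U], [Vρ̃(α), −Vα*U]] is unitary, and its upper-right block ρ(α)U is invertible. -/

import Mathlib

open Matrix
open scoped Matrix.Norms.L2Operator ComplexOrder

lemma comm_diag_sqrt {n : Type*} [Fintype n] [DecidableEq n] (d : n → ℝ) (Y : Matrix n n ℂ)
    (h : Y * Matrix.diagonal ((↑) ∘ d) = Matrix.diagonal ((↑) ∘ d) * Y) :
    Y * Matrix.diagonal ((↑) ∘ Real.sqrt ∘ d) = Matrix.diagonal ((↑) ∘ Real.sqrt ∘ d) * Y := by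
  ext i j
  have h' := congrFun (congrFun h i) j
  simp only [Matrix.mul_diagonal, Matrix.diagonal_mul, Function.comp_apply] at h' ⊢
  rcases eq_or_ne (Y i j) 0 with h0 | h0
  · simp [h0]
  · have hd : (d j : ℂ) = (d i : ℂ) := by
      have h'' : Y i j * (d j : ℂ) = Y i j * (d i : ℂ) := by rw [h', mul_comm]
      exact mul_left_cancel₀ h0 h''
    have : d j = d i := by exact_mod_cast hd
    rw [this, mul_comm]

open scoped MatrixOrder in
noncomputable def Matrix.PosSemidef.sqrt {n : Type*} [Fintype n] [DecidableEq n]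
    {A : Matrix n n ℂ} (_hA : A.PosSemidef) : Matrix n n ℂ := CFC.sqrt A

open scoped MatrixOrder in
lemma Matrix.PosSemidef.posSemidef_sqrt {n : Type*} [Fintype n] [DecidableEq n]
    {A : Matrix n n ℂ} (hA : A.PosSemidef) : hA.sqrt.PosSemidef :=
  (CFC.sqrt_nonneg A).posSemidef

open scoped MatrixOrder in
lemma Matrix.PosSemidef.sqrt_mul_self {n : Type*} [Fintype n] [DecidableEq n]
    {A : Matrix n n ℂ} (hA : A.PosSemidef) : hA.sqrt * hA.sqrt = A :=
  CFC.sqrt_mul_sqrt_self A hA.nonneg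

open scoped MatrixOrder in
lemma Matrix.PosSemidef.eq_sqrt_of_sq_eq {n : Type*} [Fintype n] [DecidableEq n]
    {A B : Matrix n n ℂ} (hB : B.PosSemidef) (hA : A.PosSemidef) (h : B ^ 2 = A) :
    B = hA.sqrt := by
  subst h
  exact (CFC.sqrt_sq B hB.nonneg).symm

open scoped MatrixOrder in
lemma Matrix.PosSemidef.sqrt_eq_spectral {n : Type*} [Fintype n] [DecidableEq n]
    {A : Matrix n n ℂ} (hA : A.PosSemidef) :
    hA.sqrt = (hA.1.eigenvectorUnitary : Matrix n n ℂ) *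
      Matrix.diagonal (((↑) : ℝ → ℂ) ∘ Real.sqrt ∘ hA.1.eigenvalues) *
      star (hA.1.eigenvectorUnitary : Matrix n n ℂ) := by
  unfold Matrix.PosSemidef.sqrt
  rw [CFC.sqrt_eq_cfc, cfc_nnreal_eq_real _ A hA.nonneg, hA.1.cfc_eq, IsHermitian.cfc,
    Unitary.conjStarAlgAut_apply]
  congr 3
  funext i
  simp [hA.eigenvalues_nonneg i]

lemma commute_sqrt {n : Type*} [Fintype n] [DecidableEq n] {A : Matrix n n ℂ}
    (hA : A.PosSemidef) (Y : Matrix n n ℂ) (h : Y * A = A * Y) :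
    Y * hA.sqrt = hA.sqrt * Y := by
  set C : Matrix n n ℂ := (hA.1.eigenvectorUnitary : Matrix n n ℂ) with hCdef
  have h1 : star C * C = 1 := Matrix.mem_unitaryGroup_iff'.mp hA.1.eigenvectorUnitary.2
  have h2 : C * star C = 1 := Matrix.mem_unitaryGroup_iff.mp hA.1.eigenvectorUnitary.2
  set D : Matrix n n ℂ := Matrix.diagonal (((↑) : ℝ → ℂ) ∘ hA.1.eigenvalues) with hDdef
  set D' : Matrix n n ℂ := Matrix.diagonal (((↑) : ℝ → ℂ) ∘ Real.sqrt ∘ hA.1.eigenvalues) with hD'def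
  have hspec : A = C * D * star C := by
    have := hA.1.spectral_theorem; rwa [Unitary.conjStarAlgAut_apply] at this
  set Z := star C * Y * C with hZ
  have key : ∀ P Q : Matrix n n ℂ,
      (C * P * star C) * (C * Q * star C) = C * (P * Q) * star C := by
    intro P Q
    calc (C * P * star C) * (C * Q * star C) = C * (P * (star C * C) * Q) * star C := by
          noncomm_ring
      _ = C * (P * Q) * star C := by rw [h1, mul_one]
  have hY : C * Z * star C = Y := by
    calc C * Z * star C = (C * star C) * Y * (C * star C) := by rw [hZ]; noncomm_ring
      _ = Y := by rw [h2, one_mul, mul_one]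
  have hZD : Z * D = D * Z := by
    have e1 : star C * (Y * A) * C = Z * D * (star C * C) := by
      rw [hspec, hZ]; noncomm_ring
    have e2 : star C * (A * Y) * C = (star C * C) * (D * Z) := by
      rw [hspec, hZ]; noncomm_ring
    have := e1.symm.trans (by rw [h] : star C * (Y * A) * C = star C * (A * Y) * C)
    rw [e2, h1, mul_one, one_mul] at this
    exact this
  have hZD' : Z * D' = D' * Z := comm_diag_sqrt _ Z hZD
  have hsq : hA.sqrt = C * D' * star C := hA.sqrt_eq_spectral
  calc Y * hA.sqrt = (C * Z * star C) * (C * D' * star C) := by rw [hY, ← hsq]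
    _ = C * (Z * D') * star C := key Z D'
    _ = C * (D' * Z) * star C := by rw [hZD']
    _ = (C * D' * star C) * (C * Z * star C) := (key D' Z).symm
    _ = hA.sqrt * Y := by rw [hY, ← hsq]

lemma intertwine_sqrt {n : Type*} [Fintype n] [DecidableEq n]
    {A B : Matrix n n ℂ} (hA : A.PosSemidef) (hB : B.PosSemidef)
    (α : Matrix n n ℂ) (h : α * B = A * α) :
    α * hB.sqrt = hA.sqrt * α := by
  set M : Matrix (n ⊕ n) (n ⊕ n) ℂ := fromBlocks A 0 0 B with hM
  set D0 : Matrix (n ⊕ n) (n ⊕ n) ℂ := fromBlocks hA.sqrt 0 0 hB.sqrt with hD0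
  set J : Matrix (n ⊕ n) (n ⊕ n) ℂ := fromBlocks 0 α 0 0 with hJ
  have hD0psd : D0.PosSemidef := by
    have hW : D0 = (fromBlocks hA.posSemidef_sqrt.sqrt 0 0 hB.posSemidef_sqrt.sqrt)ᴴ *
        (fromBlocks hA.posSemidef_sqrt.sqrt 0 0 hB.posSemidef_sqrt.sqrt) := by
      rw [fromBlocks_conjTranspose, conjTranspose_zero,
        hA.posSemidef_sqrt.posSemidef_sqrt.1, hB.posSemidef_sqrt.posSemidef_sqrt.1,
        fromBlocks_multiply]
      simp [hD0, hA.posSemidef_sqrt.sqrt_mul_self, hB.posSemidef_sqrt.sqrt_mul_self]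
    rw [hW]
    exact Matrix.posSemidef_conjTranspose_mul_self _
  have hD0sq : D0 ^ 2 = M := by
    rw [pow_two, hD0, fromBlocks_multiply]
    simp [hM, hA.sqrt_mul_self, hB.sqrt_mul_self]
  have hMpsd : M.PosSemidef := hD0sq ▸ hD0psd.pow 2
  have hD0eq : D0 = hMpsd.sqrt := hD0psd.eq_sqrt_of_sq_eq hMpsd hD0sq
  have hJM : J * M = M * J := by
    rw [hJ, hM, fromBlocks_multiply, fromBlocks_multiply]
    simp [h]
  have hc := commute_sqrt hMpsd J hJM
  rw [← hD0eq, hJ, hD0, fromBlocks_multiply, fromBlocks_multiply] at hc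
  have := congrArg Matrix.toBlocks₁₂ hc
  simpa using this

set_option maxHeartbeats 2000000 in
theorem stmt_4 (L : ℕ) (hL : 1 ≤ L) (α ρ ρt U V : Matrix (Fin L) (Fin L) ℂ)
    (hα : ‖α‖ < 1)
    (hρ : ρ.PosSemidef) (hρ2 : ρ * ρ = 1 - α * αᴴ)
    (hρt : ρt.PosSemidef) (hρt2 : ρt * ρt = 1 - αᴴ * α)
    (hU : U ∈ Matrix.unitaryGroup (Fin L) ℂ) (hV : V ∈ Matrix.unitaryGroup (Fin L) ℂ) :
    fromBlocks α (ρ * U) (V * ρt) (-(V * αᴴ * U)) ∈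
        Matrix.unitaryGroup (Fin L ⊕ Fin L) ℂ ∧
      IsUnit (ρ * U) := by
  have h1 : (1 - α * αᴴ).PosSemidef := by
    have := hρ.pow 2
    rwa [pow_two, hρ2] at this
  have h2 : (1 - αᴴ * α).PosSemidef := by
    have := hρt.pow 2
    rwa [pow_two, hρt2] at this
  have hρeq : ρ = h1.sqrt := hρ.eq_sqrt_of_sq_eq h1 (by rw [pow_two, hρ2])
  have hρteq : ρt = h2.sqrt := hρt.eq_sqrt_of_sq_eq h2 (by rw [pow_two, hρt2])
  have hint : α * (1 - αᴴ * α) = (1 - α * αᴴ) * α := by noncomm_ring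
  have key : α * ρt = ρ * α := by
    rw [hρeq, hρteq]; exact intertwine_sqrt h1 h2 α hint
  have keyT : ρt * αᴴ = αᴴ * ρ := by
    have := congrArg conjTranspose key
    simpa [conjTranspose_mul, hρ.1.eq, hρt.1.eq] using this
  have hUU : U * Uᴴ = 1 := Matrix.mem_unitaryGroup_iff.mp hU
  have hVV : V * Vᴴ = 1 := Matrix.mem_unitaryGroup_iff.mp hV
  constructor
  · rw [Matrix.mem_unitaryGroup_iff]
    show _ * (fromBlocks α (ρ * U) (V * ρt) (-(V * αᴴ * U)))ᴴ = 1
    rw [fromBlocks_conjTranspose, fromBlocks_multiply, ← fromBlocks_one]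
    rw [Matrix.fromBlocks_inj]
    refine ⟨?_, ?_, ?_, ?_⟩
    · -- α * αᴴ + (ρ*U) * (ρ*U)ᴴ = 1
      rw [conjTranspose_mul, hρ.1.eq]
      calc α * αᴴ + ρ * U * (Uᴴ * ρ) = α * αᴴ + ρ * (U * Uᴴ) * ρ := by noncomm_ring
        _ = α * αᴴ + (1 - α * αᴴ) := by rw [hUU, mul_one, hρ2]
        _ = 1 := by noncomm_ring
    · -- α * (V*ρt)ᴴ + (ρ*U) * (-(V*αᴴ*U))ᴴ = 0
      rw [conjTranspose_mul, hρt.1.eq, conjTranspose_neg, conjTranspose_mul, conjTranspose_mul]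
      calc α * (ρt * Vᴴ) + ρ * U * -(Uᴴ * ((αᴴ)ᴴ * Vᴴ))
          = (α * ρt) * Vᴴ - ρ * (U * Uᴴ) * α * Vᴴ := by
            rw [conjTranspose_conjTranspose]; noncomm_ring
        _ = (α * ρt) * Vᴴ - (ρ * α) * Vᴴ := by rw [hUU, mul_one]
        _ = 0 := by rw [key]; noncomm_ring
    · -- (V*ρt) * αᴴ + (-(V*αᴴ*U)) * (ρ*U)ᴴ = 0
      rw [conjTranspose_mul, hρ.1.eq]
      calc V * ρt * αᴴ + -(V * αᴴ * U) * (Uᴴ * ρ)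
          = V * (ρt * αᴴ) - V * αᴴ * (U * Uᴴ) * ρ := by noncomm_ring
        _ = V * (ρt * αᴴ) - V * (αᴴ * ρ) := by rw [hUU, mul_one]; noncomm_ring
        _ = 0 := by rw [keyT]; noncomm_ring
    · -- (V*ρt) * (V*ρt)ᴴ + (-(V*αᴴ*U)) * (-(V*αᴴ*U))ᴴ = 1
      rw [conjTranspose_neg, conjTranspose_mul, conjTranspose_mul, hρt.1.eq, conjTranspose_mul]
      calc V * ρt * (ρt * Vᴴ) + -(V * αᴴ * U) * -(Uᴴ * ((αᴴ)ᴴ * Vᴴ))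
          = V * (ρt * ρt) * Vᴴ + V * αᴴ * (U * Uᴴ) * α * Vᴴ := by
            rw [conjTranspose_conjTranspose]; noncomm_ring
        _ = V * (ρt * ρt) * Vᴴ + V * (αᴴ * α) * Vᴴ := by rw [hUU, mul_one]; noncomm_ring
        _ = V * Vᴴ := by rw [hρt2]; noncomm_ring
        _ = 1 := hVV
  · -- IsUnit (ρ * U)
    have hnorm : ‖α * αᴴ‖ < 1 := by
      calc ‖α * αᴴ‖ ≤ ‖α‖ * ‖αᴴ‖ := norm_mul_le _ _
        _ = ‖α‖ * ‖α‖ := by rw [Matrix.l2_opNorm_conjTranspose]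
        _ < 1 := by nlinarith [norm_nonneg α, hα]
    have hunit : IsUnit (1 - α * αᴴ) := (Units.oneSub _ hnorm).isUnit
    have hdet : IsUnit (ρ * ρ).det := by
      rw [hρ2]; exact hunit.map detMonoidHom
    rw [Matrix.det_mul] at hdet
    have hρu : IsUnit ρ := by
      rw [Matrix.isUnit_iff_isUnit_det]
      exact isUnit_of_mul_isUnit_left hdet
    have hUu : IsUnit U := by
      rw [Matrix.isUnit_iff_isUnit_det]
      exact IsUnit.of_mul_eq_one _ (by rw [← Matrix.det_mul, hUU, Matrix.det_one])
    exact hρu.mul hUu
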